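/- For every real number M > 0 and every real number s < 1, there exists a unique ρ > 0 with f_M(ρ) = s; consequently f_M restricts to a bijection from (0, ∞) onto (-∞, 1), so the Schwarzschild radius function is well defined on the Kruskal region {u·v < 1}. -/

import Mathlib

/-- The Kruskal relation function `f_M(ρ) = (1 - ρ/(2M))·exp(ρ/(2M))`. -/
noncomputable def fM (M ρ : ℝ) : ℝ := (1 - ρ / (2 * M)) * Real.exp (ρ / (2 * M))

lemma fM_hasDerivAt (M : ℝ) (hM : 0 < M) (x : ℝ) :
    HasDerivAt (fM M) (-(x / (2 * M) ^ 2) * Real.exp (x / (2 * M))) x := by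
  have hc : (2 * M) ≠ 0 := by positivity
  have h1 : HasDerivAt (fun ρ : ℝ => ρ / (2 * M)) (1 / (2 * M)) x :=
    (hasDerivAt_id x).div_const (2 * M)
  have h2 := ((hasDerivAt_const x (1:ℝ)).sub h1).mul h1.exp
  refine h2.congr_deriv ?_
  simp only [Pi.sub_apply]
  field_simp
  ring

lemma fM_strictAntiOn (M : ℝ) (hM : 0 < M) : StrictAntiOn (fM M) (Set.Ici 0) := by
  apply strictAntiOn_of_deriv_neg (convex_Ici 0)
  · exact fun x _ => ((fM_hasDerivAt M hM x).continuousAt).continuousWithinAt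
  · intro x hx
    rw [interior_Ici] at hx
    rw [(fM_hasDerivAt M hM x).deriv]
    have h1 : 0 < Real.exp (x / (2 * M)) := Real.exp_pos _
    have h2 : 0 < x / (2 * M) ^ 2 := div_pos hx (by positivity)
    nlinarith

lemma fM_zero (M : ℝ) : fM M 0 = 1 := by simp [fM]

lemma fM_exists (M : ℝ) (hM : 0 < M) {s : ℝ} (hs : s < 1) :
    ∃ ρ : ℝ, 0 < ρ ∧ fM M ρ = s := by
  set x₀ : ℝ := 2 * M * max 1 (2 - s) with hx₀
  have hx₀pos : 0 < x₀ := by positivity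
  have hcont : ContinuousOn (fM M) (Set.Icc 0 x₀) :=
    fun x _ => ((fM_hasDerivAt M hM x).continuousAt).continuousWithinAt
  have hval : fM M x₀ ≤ s - 1 := by
    have hdiv : x₀ / (2 * M) = max 1 (2 - s) := by
      field_simp [hx₀]
      exact hx₀
    have hge1 : (1:ℝ) ≤ x₀ / (2 * M) := by rw [hdiv]; exact le_max_left _ _
    have hge2 : 2 - s ≤ x₀ / (2 * M) := by rw [hdiv]; exact le_max_right _ _
    have hexp : (1:ℝ) ≤ Real.exp (x₀ / (2 * M)) := by
      rw [Real.one_le_exp_iff]; linarith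
    have hneg : 1 - x₀ / (2 * M) ≤ s - 1 := by linarith
    have : (1 - x₀ / (2 * M)) * Real.exp (x₀ / (2 * M)) ≤ (1 - x₀ / (2 * M)) * 1 := by
      apply mul_le_mul_of_nonpos_left hexp; linarith
    calc fM M x₀ ≤ (1 - x₀ / (2 * M)) * 1 := this
      _ ≤ s - 1 := by linarith
  have hmem : s ∈ Set.Icc (fM M x₀) (fM M 0) := by
    rw [fM_zero]; exact ⟨by linarith, le_of_lt hs⟩
  obtain ⟨ρ, hρmem, hρval⟩ := intermediate_value_Icc' (le_of_lt hx₀pos) hcont hmem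
  refine ⟨ρ, ?_, hρval⟩
  rcases lt_or_eq_of_le hρmem.1 with h | h
  · exact h
  · exfalso; rw [← h] at hρval; rw [fM_zero] at hρval; linarith

theorem fM_bijective_onto_Iio_one (M : ℝ) (hM : 0 < M) :
    (∀ s : ℝ, s < 1 → ∃! ρ : ℝ, 0 < ρ ∧ fM M ρ = s) ∧
      Set.BijOn (fM M) (Set.Ioi (0 : ℝ)) (Set.Iio (1 : ℝ)) := by
  have hanti := fM_strictAntiOn M hM
  have hinj : Set.InjOn (fM M) (Set.Ici 0) := hanti.injOn
  constructor
  · intro s hs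
    obtain ⟨ρ, hρ, hval⟩ := fM_exists M hM hs
    refine ⟨ρ, ⟨hρ, hval⟩, ?_⟩
    rintro ρ' ⟨hρ', hval'⟩
    exact hinj (le_of_lt hρ') (le_of_lt hρ) (hval'.trans hval.symm)
  · refine ⟨?_, ?_, ?_⟩
    · intro x hx
      have := hanti (Set.self_mem_Ici) (Set.mem_Ici.2 (le_of_lt hx)) hx
      rw [fM_zero] at this
      exact this
    · exact hinj.mono (fun x (hx : x ∈ Set.Ioi (0:ℝ)) => Set.mem_Ici.2 (le_of_lt hx))
    · intro s hs
      obtain ⟨ρ, hρ, hval⟩ := fM_exists M hM hs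
      exact ⟨ρ, hρ, hval⟩
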